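/- Let Z' = {z'_1 ≥ … ≥ z'_m} be a multiset of nonnegative integers in which no entry is repeated more than twice, and let Z = {z_1 ≥ … ≥ z_m} be another such multiset with the same sum and Z ⊴ Z', Z ≠ Z'. Let k be minimal with z_k < z'_k and let l > k be minimal with Σ_{i≤l} z_i = Σ_{i≤l} z'_i. Then the multiset Z'' obtained from Z by replacing z_k with z_k+1 and z_l with z_l−1 is weakly decreasing, has no entry repeated more than twice, and satisfies Z ⊴ Z'' ⊴ Z'. -/

import Mathlib

/-- Dominance order on lists of naturals (same length, same sum):
partial sums of the first list are bounded by those of the second. -/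
def LDom (L L' : List ℕ) : Prop := ∀ d, (L.take d).sum ≤ (L'.take d).sum

private lemma sum_set_add (l : List ℕ) {i : ℕ} (a : ℕ) (h : i < l.length) :
    (l.set i a).sum + l[i] = l.sum + a := by
  rw [List.sum_set, if_pos h]
  conv_rhs => rw [← List.take_append_drop (i+1) l]
  rw [List.sum_append]
  have hd : l.take (i+1) = l.take i ++ [l[i]] := by
    rw [List.take_succ]
    simp [List.getElem?_eq_getElem h]
  rw [hd, List.sum_append, List.sum_cons, List.sum_nil]
  omega

private lemma sum_take_set' (l : List ℕ) {i d : ℕ} (a : ℕ) (hid : i < d) (hil : i < l.length) :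
    ((l.set i a).take d).sum + l.getD i 0 = (l.take d).sum + a := by
  rw [List.take_set]
  have h1 : i < (l.take d).length := by
    rw [List.length_take]; omega
  have h2 := sum_set_add (l.take d) a h1
  rw [List.getElem_take] at h2
  rwa [List.getD_eq_getElem _ _ hil]

private lemma take_set_of_le (l : List ℕ) {i d : ℕ} (a : ℕ) (hdi : d ≤ i) :
    (l.set i a).take d = l.take d := by
  rw [List.take_set, List.set_eq_of_length_le]
  rw [List.length_take]; omega

private lemma count_set' (l : List ℕ) (i a v : ℕ) (h : i < l.length) :
    (l.set i a).count v
      = (l.count v - if l.getD i 0 = v then 1 else 0) + if a = v then 1 else 0 := by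
  rw [List.count_set (a := a) (b := v) h, List.getD_eq_getElem _ _ h]
  simp only [beq_iff_eq]

private lemma sorted_getD_mono {L : List ℕ} (hs : List.Pairwise (· ≥ ·) L) {i j : ℕ}
    (hij : i ≤ j) : L.getD j 0 ≤ L.getD i 0 := by
  rcases le_or_gt L.length j with h | h
  · rw [List.getD_eq_default _ _ h]; exact Nat.zero_le _
  · rw [List.getD_eq_getElem _ _ h, List.getD_eq_getElem _ _ (lt_of_le_of_lt hij h)]
    rcases eq_or_lt_of_le hij with rfl | hij'
    · exact le_refl _
    · exact List.pairwise_iff_getElem.mp hs i j (lt_of_le_of_lt hij h) h hij'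

private lemma adjacent_of_two_le_count {L : List ℕ} (hs : List.Pairwise (· ≥ ·) L) {v : ℕ}
    (hc : 2 ≤ L.count v) :
    ∃ i, i + 1 < L.length ∧ L.getD i 0 = v ∧ L.getD (i + 1) 0 = v := by
  have hsub : (List.replicate 2 v).Sublist L := List.replicate_sublist_iff.mpr hc
  obtain ⟨is, his, hp⟩ := List.sublist_eq_map_getElem hsub
  match is, his, hp with
  | [], his, _ => simp [List.replicate] at his
  | [_], his, _ => simp [List.replicate] at his
  | (_ :: _ :: _ :: _), his, _ => simp [List.replicate] at his
  | [i, j], his, hp =>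
    simp only [List.replicate, List.map_cons, List.map_nil, List.cons.injEq, and_true] at his
    obtain ⟨hvi, hvj⟩ := his
    have hij : (i : ℕ) < (j : ℕ) :=
      (List.pairwise_cons.mp hp).1 j (List.mem_singleton.mpr rfl)
    have hjl : (j : ℕ) < L.length := j.isLt
    have hi1 : (i : ℕ) + 1 < L.length := by omega
    refine ⟨i, hi1, ?_, ?_⟩
    · rw [List.getD_eq_getElem _ _ (by omega)]
      rw [hvi]; rfl
    · have h1 : L.getD ((i : ℕ) + 1) 0 ≤ L.getD i 0 := sorted_getD_mono hs (by omega)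
      have h2 : L.getD (j : ℕ) 0 ≤ L.getD ((i : ℕ) + 1) 0 := sorted_getD_mono hs (by omega)
      have e1 : L.getD (i : ℕ) 0 = v := by
        rw [List.getD_eq_getElem _ _ (by omega)]; rw [hvi]; rfl
      have e2 : L.getD (j : ℕ) 0 = v := by
        rw [List.getD_eq_getElem _ _ hjl]; rw [hvj]; rfl
      omega

private lemma three_le_count {L : List ℕ} {i v : ℕ} (h2 : i + 2 < L.length)
    (e0 : L.getD i 0 = v) (e1 : L.getD (i + 1) 0 = v) (e2 : L.getD (i + 2) 0 = v) :
    3 ≤ L.count v := by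
  have hsub : (List.drop i L).Sublist L := List.drop_sublist i L
  have e : List.drop i L = v :: v :: v :: List.drop (i + 3) L := by
    rw [List.drop_eq_getElem_cons (by omega : i < L.length),
        List.drop_eq_getElem_cons (by omega : i + 1 < L.length),
        List.drop_eq_getElem_cons (by omega : i + 2 < L.length)]
    rw [List.getD_eq_getElem _ _ (by omega : i < L.length)] at e0
    rw [List.getD_eq_getElem _ _ (by omega : i + 1 < L.length)] at e1
    rw [List.getD_eq_getElem _ _ (by omega : i + 2 < L.length)] at e2
    rw [e0, e1, e2]
  have hc := hsub.count_le v
  rw [e] at hc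
  simp only [List.count_cons_self] at hc
  omega

theorem intermediate_multiset_construction (m : ℕ) (L L' : List ℕ)
    (hLm : L.length = m) (hL'm : L'.length = m)
    (hLs : List.Pairwise (· ≥ ·) L) (hL's : List.Pairwise (· ≥ ·) L')
    (hsum : L.sum = L'.sum)
    (hLc : ∀ v, L.count v ≤ 2) (hL'c : ∀ v, L'.count v ≤ 2)
    (hdom : LDom L L') (hne : L ≠ L')
    (k : ℕ) (hk : L.getD k 0 < L'.getD k 0)
    (hkmin : ∀ i, i < k → L.getD i 0 = L'.getD i 0)
    (l : ℕ) (hkl : k < l) (hlm : l < m)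
    (hl : (L.take (l + 1)).sum = (L'.take (l + 1)).sum)
    (hlmin : ∀ j, k < j → j < l → (L.take (j + 1)).sum ≠ (L'.take (j + 1)).sum) :
    List.Pairwise (· ≥ ·) ((L.set k (L.getD k 0 + 1)).set l (L.getD l 0 - 1)) ∧
    (∀ v, ((L.set k (L.getD k 0 + 1)).set l (L.getD l 0 - 1)).count v ≤ 2) ∧
    LDom L ((L.set k (L.getD k 0 + 1)).set l (L.getD l 0 - 1)) ∧
    LDom ((L.set k (L.getD k 0 + 1)).set l (L.getD l 0 - 1)) L' := by
  have hkm : k < m := by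
    by_contra h
    rw [List.getD_eq_default _ _ (by omega)] at hk
    omega
  set a := L.getD k 0 with ha
  set b := L.getD l 0 with hb
  set L2 := (L.set k (a + 1)).set l (b - 1) with hL2
  set C1 := L.set k (a + 1) with hC1
  have hLmono : ∀ {i j : ℕ}, i ≤ j → L.getD j 0 ≤ L.getD i 0 := fun h => sorted_getD_mono hLs h
  have hL'mono : ∀ {i j : ℕ}, i ≤ j → L'.getD j 0 ≤ L'.getD i 0 := fun h => sorted_getD_mono hL's h
  -- sum of take (i+1)
  have hstsL : ∀ i, i < m → (L.take (i + 1)).sum = (L.take i).sum + L.getD i 0 := by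
    intro i him
    rw [List.sum_take_succ _ _ (by omega)]
    congr 1
    exact (List.getD_eq_getElem L 0 (by omega)).symm
  have hstsL' : ∀ i, i < m → (L'.take (i + 1)).sum = (L'.take i).sum + L'.getD i 0 := by
    intro i him
    rw [List.sum_take_succ _ _ (by omega)]
    congr 1
    exact (List.getD_eq_getElem L' 0 (by omega)).symm
  -- prefix sums equal up to k
  have hpre : ∀ d, d ≤ k → (L.take d).sum = (L'.take d).sum := by
    intro d hd
    induction d with
    | zero => simp
    | succ n ih =>
      have hn : n < k := by omega
      rw [hstsL n (by omega), hstsL' n (by omega), ih (by omega), hkmin n hn]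
  -- strict dominance between k and l
  have hstrict : ∀ d, k < d → d ≤ l → (L.take d).sum < (L'.take d).sum := by
    intro d h1 h2
    rcases eq_or_lt_of_le (Nat.succ_le_of_lt h1) with he | hlt'
    · rw [← he, hstsL k (by omega), hstsL' k (by omega), hpre k le_rfl]
      omega
    · have hne' := hlmin (d - 1) (by omega) (by omega)
      have hd : d - 1 + 1 = d := by omega
      rw [hd] at hne'
      exact lt_of_le_of_ne (hdom d) hne'
  have hSl : (L.take l).sum < (L'.take l).sum := hstrict l hkl le_rfl
  -- L'_l < L_l = b
  have hb' : L'.getD l 0 < b := by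
    have e1 := hstsL l hlm
    have e2 := hstsL' l hlm
    omega
  have hb1 : 1 ≤ b := by omega
  have hba : b ≤ a := hLmono (le_of_lt hkl)
  -- L_{l+1} ≤ L'_{l+1} (when l+1 < m)
  have hl1le : l + 1 < m → L.getD (l + 1) 0 ≤ L'.getD (l + 1) 0 := by
    intro h
    have e1 := hstsL (l + 1) h
    have e2 := hstsL' (l + 1) h
    rw [show l + 1 + 1 = l + 2 from by omega] at e1 e2
    have := hdom (l + 2)
    omega
  have hll1 : L.getD (l + 1) 0 < b := by
    rcases le_or_gt m (l + 1) with h | h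
    · rw [List.getD_eq_default _ _ (by omega)]; omega
    · have h1 := hl1le h
      have h2 : L'.getD (l + 1) 0 ≤ L'.getD l 0 := hL'mono (by omega)
      omega
  have hk1 : ∀ i, i < k → a + 1 ≤ L.getD i 0 := by
    intro i hik
    have h1 := hkmin i hik
    have h2 : L'.getD k 0 ≤ L'.getD i 0 := hL'mono (le_of_lt hik)
    omega
  -- getD values of L2
  have hlenL2 : L2.length = m := by
    rw [hL2, List.length_set, List.length_set, hLm]
  have hC1l : C1.getD l 0 = b := by
    rw [hC1, List.getD_eq_getElem _ _ (by rw [List.length_set]; omega),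
        List.getElem_set, if_neg (by omega), ← List.getD_eq_getElem _ 0 (by omega)]
  have hL2l : L2.getD l 0 = b - 1 := by
    rw [hL2, List.getD_eq_getElem _ _ (by rw [List.length_set, List.length_set]; omega),
        List.getElem_set, if_pos rfl]
  have hL2k : L2.getD k 0 = a + 1 := by
    rw [hL2, List.getD_eq_getElem _ _ (by rw [List.length_set, List.length_set]; omega),
        List.getElem_set, if_neg (by omega), List.getElem_set, if_pos rfl]
  have hL2o : ∀ j, j ≠ k → j ≠ l → L2.getD j 0 = L.getD j 0 := by
    intro j hjk hjl
    rcases le_or_gt m j with h | h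
    · rw [List.getD_eq_default _ _ (by omega), List.getD_eq_default _ _ (by omega)]
    · rw [hL2, List.getD_eq_getElem _ _ (by rw [List.length_set, List.length_set]; omega),
          List.getElem_set, if_neg (by omega), List.getElem_set, if_neg (by omega),
          ← List.getD_eq_getElem _ 0 (by omega)]
  -- Sortedness
  have hsorted : List.Pairwise (· ≥ ·) L2 := by
    refine List.pairwise_iff_getElem.mpr ?_
    intro i j hi hj hij
    have him : i < m := by rwa [hlenL2] at hi
    have hjm : j < m := by rwa [hlenL2] at hj
    show L2[j] ≤ L2[i]
    rw [← List.getD_eq_getElem _ 0 hi, ← List.getD_eq_getElem _ 0 hj]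
    by_cases hik : i = k
    · subst hik
      by_cases hjl : j = l
      · subst hjl; rw [hL2k, hL2l]; omega
      · rw [hL2k, hL2o j (by omega) hjl]
        have := hLmono (le_of_lt hij) (i := i) (j := j)
        omega
    · by_cases hjk : j = k
      · subst hjk
        rw [hL2k, hL2o i hik (by omega)]
        exact hk1 i hij
      · by_cases hil : i = l
        · subst hil
          rw [hL2l, hL2o j hjk (by omega)]
          have h1 : L.getD j 0 ≤ L.getD (i + 1) 0 := hLmono (by omega)
          omega
        · by_cases hjl : j = l
          · subst hjl
            rw [hL2l, hL2o i hik hil]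
            have h1 : L.getD j 0 ≤ L.getD i 0 := hLmono (le_of_lt hij)
            omega
          · rw [hL2o i hik hil, hL2o j hjk hjl]
            exact hLmono (le_of_lt hij)
  -- counts
  have hca1 : L.count (a + 1) ≤ 1 := by
    by_contra h
    obtain ⟨i, hi1, e0, e1⟩ := adjacent_of_two_le_count hLs (by omega : 2 ≤ L.count (a + 1))
    rw [hLm] at hi1
    have hik : i + 1 < k := by
      by_contra h'
      have : L.getD (i + 1) 0 ≤ L.getD k 0 := hLmono (by omega)
      omega
    have hv1 : L'.getD (i + 1) 0 = a + 1 := by rw [← hkmin (i + 1) hik]; exact e1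
    have hvi : L'.getD i 0 = a + 1 := by rw [← hkmin i (by omega)]; exact e0
    have hvk : L'.getD k 0 = a + 1 := by
      have h1 : L'.getD k 0 ≤ L'.getD (i + 1) 0 := hL'mono (by omega)
      omega
    have hvk1 : L'.getD (k - 1) 0 = a + 1 := by
      have h1 : L'.getD (k - 1) 0 ≤ L'.getD i 0 := hL'mono (by omega)
      have h2 : L'.getD k 0 ≤ L'.getD (k - 1) 0 := hL'mono (by omega)
      omega
    have hvk2 : L'.getD (k - 2) 0 = a + 1 := by
      have h1 : L'.getD (k - 2) 0 ≤ L'.getD i 0 := hL'mono (by omega)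
      have h2 : L'.getD k 0 ≤ L'.getD (k - 2) 0 := hL'mono (by omega)
      omega
    have h3 := three_le_count (L := L') (i := k - 2) (v := a + 1)
      (by rw [hL'm]; omega)
      hvk2 (by rw [(by omega : k - 2 + 1 = k - 1)]; exact hvk1)
      (by rw [(by omega : k - 2 + 2 = k)]; exact hvk)
    have := hL'c (a + 1)
    omega
  have hcb1 : L.count (b - 1) ≤ 1 := by
    by_contra h
    obtain ⟨i, hi1, e0, e1⟩ := adjacent_of_two_le_count hLs (by omega : 2 ≤ L.count (b - 1))
    rw [hLm] at hi1
    have hli : l < i := by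
      by_contra h'
      have : L.getD l 0 ≤ L.getD i 0 := hLmono (by omega)
      omega
    have hLl1 : L.getD (l + 1) 0 = b - 1 := by
      have h1 : L.getD i 0 ≤ L.getD (l + 1) 0 := hLmono (by omega)
      omega
    have hLl2 : L.getD (l + 2) 0 = b - 1 := by
      have h1 : L.getD (i + 1) 0 ≤ L.getD (l + 2) 0 := hLmono (by omega)
      have h2 : L.getD (l + 2) 0 ≤ L.getD (l + 1) 0 := hLmono (by omega)
      omega
    have hl1m : l + 1 < m := by omega
    have hl2m : l + 2 < m := by omega
    have h1 := hl1le hl1m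
    have hv'l : L'.getD l 0 = b - 1 := by
      have h2 : L'.getD (l + 1) 0 ≤ L'.getD l 0 := hL'mono (by omega)
      omega
    have hv'l1 : L'.getD (l + 1) 0 = b - 1 := by
      have h2 : L'.getD (l + 1) 0 ≤ L'.getD l 0 := hL'mono (by omega)
      omega
    have hSl2 : (L.take (l + 2)).sum = (L'.take (l + 2)).sum := by
      have e2 := hstsL (l + 1) hl1m
      have e3 := hstsL' (l + 1) hl1m
      rw [show l + 1 + 1 = l + 2 from by omega] at e2 e3
      omega
    have hl2le : L.getD (l + 2) 0 ≤ L'.getD (l + 2) 0 := by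
      have e2 := hstsL (l + 2) hl2m
      have e3 := hstsL' (l + 2) hl2m
      rw [show l + 2 + 1 = l + 3 from by omega] at e2 e3
      have := hdom (l + 3)
      omega
    have hv'l2 : L'.getD (l + 2) 0 = b - 1 := by
      have h2 : L'.getD (l + 2) 0 ≤ L'.getD (l + 1) 0 := hL'mono (by omega)
      omega
    have h3 := three_le_count (L := L') (i := l) (v := b - 1)
      (by rw [hL'm]; omega) hv'l hv'l1 hv'l2
    have := hL'c (b - 1)
    omega
  have hcount : ∀ v, L2.count v ≤ 2 := by
    intro v
    have e2 : C1.count v = (L.count v - if a = v then 1 else 0) + if a + 1 = v then 1 else 0 := by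
      rw [hC1, count_set' L k (a + 1) v (by omega)]
    have e1 : L2.count v = (C1.count v - if b = v then 1 else 0) + if b - 1 = v then 1 else 0 := by
      rw [hL2, count_set' C1 l (b - 1) v (by rw [hC1, List.length_set]; omega), hC1l]
    have hc := hLc v
    by_cases hv1 : v = a + 1
    · subst hv1
      rw [if_neg (by omega : ¬ a = a + 1), if_pos rfl] at e2
      rw [if_neg (by omega : ¬ b = a + 1), if_neg (by omega : ¬ b - 1 = a + 1)] at e1
      omega
    · by_cases hv2 : v = b - 1
      · subst hv2
        rw [if_neg (by omega : ¬ b = b - 1), if_pos rfl] at e1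
        rw [if_neg (by omega : ¬ a + 1 = b - 1)] at e2
        by_cases hab : a = b - 1
        · rw [if_pos hab] at e2; omega
        · rw [if_neg hab] at e2; omega
      · rw [if_neg (show ¬ b - 1 = v from fun h => hv2 h.symm)] at e1
        rw [if_neg (show ¬ a + 1 = v from fun h => hv1 h.symm)] at e2
        by_cases hab : a = v
        · rw [if_pos hab] at e2
          by_cases hbv : b = v
          · rw [if_pos hbv] at e1; omega
          · rw [if_neg hbv] at e1; omega
        · rw [if_neg hab] at e2
          by_cases hbv : b = v
          · rw [if_pos hbv] at e1; omega
          · rw [if_neg hbv] at e1; omega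
  -- partial sums of L2
  have hS2a : ∀ d, d ≤ k → (L2.take d).sum = (L.take d).sum := by
    intro d hd
    rw [hL2, take_set_of_le C1 (b - 1) (by omega), hC1, take_set_of_le L (a + 1) hd]
  have hS2b : ∀ d, k < d → d ≤ l → (L2.take d).sum = (L.take d).sum + 1 := by
    intro d h1 h2
    rw [hL2, take_set_of_le C1 (b - 1) h2, hC1]
    have := sum_take_set' L (a + 1) h1 (by omega : k < L.length)
    omega
  have hS2c : ∀ d, l < d → (L2.take d).sum = (L.take d).sum := by
    intro d hd
    have e1 := sum_take_set' C1 (b - 1) hd (by rw [hC1, List.length_set]; omega)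
    rw [hC1l] at e1
    have e2 := sum_take_set' L (a + 1) (by omega : k < d) (by omega : k < L.length)
    rw [← hC1] at e2
    rw [hL2]
    omega
  refine ⟨hsorted, hcount, ?_, ?_⟩
  · intro d
    rcases le_or_gt d k with h | h
    · rw [hS2a d h]
    · rcases le_or_gt d l with h2 | h2
      · rw [hS2b d h h2]; omega
      · rw [hS2c d h2]
  · intro d
    rcases le_or_gt d k with h | h
    · rw [hS2a d h]; exact hdom d
    · rcases le_or_gt d l with h2 | h2
      · rw [hS2b d h h2]
        have := hstrict d h h2
        omega
      · rw [hS2c d h2]; exact hdom d
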